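/- arXiv:0807.3139 — 4 statements merged into one kernel-verified Lean document; each statement's English description precedes it below -/
import Mathlib

section
/- Let ℓ be a prime and 0 ≤ r ≤ ℓ-1. The evaluation map α_r : F_ℓ[X,Y]_r → I_r, sending a homogeneous polynomial P of degree r to the function (a,b) ↦ P(a,b) on F_ℓ², is an injective F_ℓ-linear map. -/
open MvPolynomial

/-- The space `I_n` of functions `f : F_ℓ² → F_ℓ` vanishing at the origin and homogeneous of
degree `n`: `f (x • v) = x ^ n * f v` for all nonzero scalars `x`. -/
def homogeneousFns (ℓ n : ℕ) : Submodule (ZMod ℓ) ((Fin 2 → ZMod ℓ) → ZMod ℓ) where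
  carrier := {f | f 0 = 0 ∧ ∀ x : ZMod ℓ, x ≠ 0 → ∀ v, f (x • v) = x ^ n * f v}
  add_mem' := by
    rintro f g ⟨hf0, hf⟩ ⟨hg0, hg⟩
    refine ⟨by simp [hf0, hg0], fun x hx v => ?_⟩
    simp only [Pi.add_apply, hf x hx v, hg x hx v]
    ring
  zero_mem' := ⟨rfl, by simp⟩
  smul_mem' := by
    rintro c f ⟨hf0, hf⟩
    refine ⟨by simp [hf0], fun x hx v => ?_⟩
    simp only [Pi.smul_apply, hf x hx v, smul_eq_mul]
    ring

/-- The evaluation map `α`, sending a polynomial `P` to the function `v ↦ P(v)` on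
`F_ℓ² \ {0}`, extended by `0` at the origin. -/
noncomputable def evalFn (ℓ : ℕ) (P : MvPolynomial (Fin 2) (ZMod ℓ)) :
    (Fin 2 → ZMod ℓ) → ZMod ℓ :=
  fun v => if v = 0 then 0 else MvPolynomial.eval v P

/-- Evaluation of a homogeneous polynomial at a scalar multiple. -/
lemma eval_smul_of_isHomogeneous {R : Type*} [CommRing R] {n : ℕ}
    {P : MvPolynomial (Fin 2) R} (hP : P.IsHomogeneous n) (x : R) (v : Fin 2 → R) :
    MvPolynomial.eval (x • v) P = x ^ n * MvPolynomial.eval v P := by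
  rw [eval_eq, eval_eq, Finset.mul_sum]
  refine Finset.sum_congr rfl fun d hd => ?_
  have hdeg : ∑ i ∈ d.support, d i = n := by
    have := hP (MvPolynomial.mem_support_iff.mp hd)
    rw [Pi.one_def, ← Finsupp.degree_eq_weight_one] at this
    exact this
  calc P.coeff d * ∏ i ∈ d.support, (x • v) i ^ d i
      = P.coeff d * ∏ i ∈ d.support, (x ^ d i * v i ^ d i) := by
        simp [mul_pow]
    _ = P.coeff d * ((∏ i ∈ d.support, x ^ d i) * ∏ i ∈ d.support, v i ^ d i) := by
        rw [Finset.prod_mul_distrib]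
    _ = x ^ n * (P.coeff d * ∏ i ∈ d.support, v i ^ d i) := by
        rw [Finset.prod_pow_eq_pow_sum, hdeg]; ring

/-- A homogeneous polynomial vanishing away from the origin also vanishes at the origin. -/
lemma eval_zero_eq_zero_of_vanish {ℓ : ℕ} [Fact (Nat.Prime ℓ)] {r : ℕ}
    {D : MvPolynomial (Fin 2) (ZMod ℓ)} (hD : D.IsHomogeneous r)
    (h : ∀ v : Fin 2 → ZMod ℓ, v ≠ 0 → MvPolynomial.eval v D = 0) :
    MvPolynomial.eval (0 : Fin 2 → ZMod ℓ) D = 0 := by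
  have : MvPolynomial.eval (0 : Fin 2 → ZMod ℓ) D = D.coeff 0 := by
    rw [eval_zero]; rfl
  rw [this]
  rcases Nat.eq_zero_or_pos r with hr0 | hr0
  · subst hr0
    have hones : (fun _ : Fin 2 => (1 : ZMod ℓ)) ≠ 0 := by
      intro hc
      have := congrFun hc 0
      simp only [Pi.zero_apply] at this
      exact one_ne_zero this
    have heval := h _ hones
    rw [eval_eq] at heval
    rw [← heval]
    rw [Finset.sum_eq_single (0 : Fin 2 →₀ ℕ)]
    · simp
    · intro d hd hdne
      exfalso
      apply hdne
      have := hD (MvPolynomial.mem_support_iff.mp hd)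
      rw [Pi.one_def, ← Finsupp.degree_eq_weight_one, Finsupp.degree_eq_zero_iff] at this
      exact this
    · intro h0
      simp [MvPolynomial.notMem_support_iff.mp h0]
  · exact hD.coeff_eq_zero (by simp [Finsupp.degree_eq_zero_iff]; omega)

/-- For a prime `ℓ` and `0 ≤ r ≤ ℓ - 1`, the evaluation map
`α_r : F_ℓ[X,Y]_r → I_r` is a well-defined injective `F_ℓ`-linear map. -/
theorem evalFn_injective_on_homogeneous (ℓ : ℕ) [Fact (Nat.Prime ℓ)] (r : ℕ)
    (hr : r ≤ ℓ - 1) :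
    (∀ P ∈ MvPolynomial.homogeneousSubmodule (Fin 2) (ZMod ℓ) r,
        evalFn ℓ P ∈ homogeneousFns ℓ r) ∧
    Function.Injective
      (fun P : ↥(MvPolynomial.homogeneousSubmodule (Fin 2) (ZMod ℓ) r) =>
        evalFn ℓ (P : MvPolynomial (Fin 2) (ZMod ℓ))) := by
  have hℓ : Nat.Prime ℓ := Fact.out
  have hcard : Fintype.card (ZMod ℓ) = ℓ := ZMod.card ℓ
  constructor
  · intro P hP
    rw [MvPolynomial.mem_homogeneousSubmodule] at hP
    refine ⟨by simp [evalFn], fun x hx v => ?_⟩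
    by_cases hv : v = 0
    · subst hv
      simp [evalFn]
    · have hxv : x • v ≠ 0 := by
        intro hc
        apply hv
        funext i
        have := congrFun hc i
        simp only [Pi.smul_apply, smul_eq_mul, Pi.zero_apply] at this
        rcases mul_eq_zero.mp this with h1 | h1
        · exact absurd h1 hx
        · simp [h1]
      simp only [evalFn, if_neg hv, if_neg hxv]
      exact eval_smul_of_isHomogeneous hP x v
  · rintro ⟨P, hP⟩ ⟨Q, hQ⟩ hPQ
    rw [MvPolynomial.mem_homogeneousSubmodule] at hP hQ
    simp only [Subtype.mk.injEq]
    have hD : (P - Q).IsHomogeneous r := hP.sub hQ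
    have hvan : ∀ v : Fin 2 → ZMod ℓ, v ≠ 0 → MvPolynomial.eval v (P - Q) = 0 := by
      intro v hv
      have := congrFun hPQ v
      simp only [evalFn, if_neg hv] at this
      simp [this]
    have hall : ∀ v : Fin 2 → ZMod ℓ, MvPolynomial.eval v (P - Q) = 0 := by
      intro v
      by_cases hv : v = 0
      · subst hv; exact eval_zero_eq_zero_of_vanish hD hvan
      · exact hvan v hv
    have hmem : P - Q ∈ MvPolynomial.restrictDegree (Fin 2) (ZMod ℓ)
        (Fintype.card (ZMod ℓ) - 1) := by
      rw [MvPolynomial.mem_restrictDegree]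
      intro s hs i
      have hdeg : s.degree = r := by
        rw [Finsupp.degree_eq_weight_one]
        exact hD (MvPolynomial.mem_support_iff.mp hs)
      have : s i ≤ s.degree := Finsupp.le_degree i s
      rw [hcard]
      omega
    have := MvPolynomial.eq_zero_of_eval_eq_zero (σ := Fin 2) (K := ZMod ℓ) (P - Q) hall hmem
    exact sub_eq_zero.mp this
end

section
/- Let ℓ be a prime and 0 ≤ r ≤ ℓ-1. The bilinear pairing I_r × I_{ℓ-1-r} → F_ℓ defined by (f, g) ↦ Σ_{(a,b) ∈ F_ℓ² \ {0}} f(a,b) g(a,b) is perfect and SL₂(F_ℓ)-invariant (with respect to the action (f·M)(a,b) = f((a,b)Mᵗ)). -/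
open MvPolynomial

lemma aux_nondeg (ℓ : ℕ) [Fact (Nat.Prime ℓ)] (m n : ℕ) (hmn : m + n = ℓ - 1)
    (h : (Fin 2 → ZMod ℓ) → ZMod ℓ)
    (hh0 : h 0 = 0) (hhom : ∀ x : ZMod ℓ, x ≠ 0 → ∀ v, h (x • v) = x ^ n * h v)
    (H : ∀ k : (Fin 2 → ZMod ℓ) → ZMod ℓ, k 0 = 0 →
      (∀ x : ZMod ℓ, x ≠ 0 → ∀ v, k (x • v) = x ^ m * k v) →
      ∑ v ∈ Finset.univ.erase (0 : Fin 2 → ZMod ℓ), k v * h v = 0) : h = 0 := by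
  funext v
  by_cases hv : v = 0
  · simp [hv, hh0]
  obtain ⟨i, hi⟩ : ∃ i, v i ≠ 0 := by
    by_contra hc
    push_neg at hc
    exact hv (funext hc)
  set k : (Fin 2 → ZMod ℓ) → ZMod ℓ :=
    fun w => if w ≠ 0 ∧ w = (w i * (v i)⁻¹) • v then (w i * (v i)⁻¹) ^ m else 0 with hk
  have hcval : ∀ c : ZMod ℓ, (c • v) i * (v i)⁻¹ = c := by
    intro c
    simp only [Pi.smul_apply, smul_eq_mul]
    field_simp
  have hk0 : k 0 = 0 := by simp [hk]
  have hkhom : ∀ x : ZMod ℓ, x ≠ 0 → ∀ w, k (x • w) = x ^ m * k w := by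
    intro x hx w
    have hxc : (x • w) i * (v i)⁻¹ = x * (w i * (v i)⁻¹) := by
      simp only [Pi.smul_apply, smul_eq_mul]; ring
    show (if x • w ≠ 0 ∧ x • w = ((x • w) i * (v i)⁻¹) • v then ((x • w) i * (v i)⁻¹) ^ m else 0)
      = x ^ m * (if w ≠ 0 ∧ w = (w i * (v i)⁻¹) • v then (w i * (v i)⁻¹) ^ m else 0)
    by_cases hcond : w ≠ 0 ∧ w = (w i * (v i)⁻¹) • v
    · rw [if_pos hcond, if_pos, hxc, mul_pow]
      refine ⟨smul_ne_zero hx hcond.1, ?_⟩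
      rw [hxc, mul_smul, ← hcond.2]
    · rw [if_neg hcond, if_neg, mul_zero]
      rintro ⟨h1, h2⟩
      apply hcond
      have hw : w ≠ 0 := fun hw0 => h1 (by rw [hw0, smul_zero])
      rw [hxc, mul_smul] at h2
      exact ⟨hw, smul_right_injective (Fin 2 → ZMod ℓ) hx h2⟩
  have hsum := H k hk0 hkhom
  -- rewrite the sum as a sum over the line through v
  set S := (Finset.univ.erase (0 : ZMod ℓ)).image (fun c => c • v) with hS
  have hSsub : S ⊆ Finset.univ.erase (0 : Fin 2 → ZMod ℓ) := by
    intro w hw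
    simp only [hS, Finset.mem_image, Finset.mem_erase] at hw ⊢
    obtain ⟨c, ⟨hc, -⟩, rfl⟩ := hw
    exact ⟨smul_ne_zero hc hv, Finset.mem_univ _⟩
  have hzero : ∀ w ∈ Finset.univ.erase (0 : Fin 2 → ZMod ℓ), w ∉ S → k w * h w = 0 := by
    intro w hw hwS
    rw [Finset.mem_erase] at hw
    show (if w ≠ 0 ∧ w = (w i * (v i)⁻¹) • v then (w i * (v i)⁻¹) ^ m else 0) * h w = 0
    rw [if_neg, zero_mul]
    rintro ⟨h1, h2⟩
    apply hwS
    have hc : w i * (v i)⁻¹ ≠ 0 := by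
      intro hc0
      apply h1
      rw [h2, hc0, zero_smul]
    simp only [hS, Finset.mem_image, Finset.mem_erase]
    exact ⟨w i * (v i)⁻¹, ⟨hc, Finset.mem_univ _⟩, h2.symm⟩
  rw [← Finset.sum_subset hSsub hzero] at hsum
  have hinj : Set.InjOn (fun c : ZMod ℓ => c • v) (Finset.univ.erase (0 : ZMod ℓ)) := by
    intro a _ b _ hab
    have : a * v i = b * v i := congrFun hab i
    exact mul_right_cancel₀ hi this
  rw [hS, Finset.sum_image fun a ha b hb => hinj ha hb] at hsum
  have hterm : ∀ c ∈ Finset.univ.erase (0 : ZMod ℓ), k (c • v) * h (c • v) = h v := by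
    intro c hc
    rw [Finset.mem_erase] at hc
    have hcv : c • v ≠ 0 := smul_ne_zero hc.1 hv
    have hkv : k (c • v) = c ^ m := by
      show (if c • v ≠ 0 ∧ c • v = ((c • v) i * (v i)⁻¹) • v
        then ((c • v) i * (v i)⁻¹) ^ m else 0) = c ^ m
      rw [hcval c, if_pos ⟨hcv, rfl⟩]
    rw [hkv, hhom c hc.1 v, ← mul_assoc, ← pow_add, hmn,
      ZMod.pow_card_sub_one_eq_one hc.1, one_mul]
  rw [Finset.sum_congr rfl hterm, Finset.sum_const] at hsum
  have hcard : (Finset.univ.erase (0 : ZMod ℓ)).card = ℓ - 1 := by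
    rw [Finset.card_erase_of_mem (Finset.mem_univ _), Finset.card_univ, ZMod.card]
  rw [hcard, nsmul_eq_mul] at hsum
  have hne : ((ℓ - 1 : ℕ) : ZMod ℓ) ≠ 0 := by
    have hℓ : 2 ≤ ℓ := (Fact.out : Nat.Prime ℓ).two_le
    rw [Nat.cast_sub (by omega), ZMod.natCast_self, zero_sub, Nat.cast_one]
    simp only [neg_ne_zero]
    exact one_ne_zero
  exact (mul_eq_zero.mp hsum).resolve_left hne

/-- For a prime `ℓ` and `0 ≤ r ≤ ℓ - 1`, the pairing
`(f, g) ↦ Σ_{v ∈ F_ℓ² \ {0}} f(v) g(v)` between `I_r` and `I_{ℓ-1-r}` is `SL₂(F_ℓ)`-invariant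
and perfect (nondegenerate on both sides). -/
theorem homogeneousFns_pairing_perfect_invariant (ℓ : ℕ) [Fact (Nat.Prime ℓ)] (r : ℕ)
    (hr : r ≤ ℓ - 1) :
    (∀ M : Matrix (Fin 2) (Fin 2) (ZMod ℓ), M.det = 1 →
      ∀ f ∈ homogeneousFns ℓ r, ∀ g ∈ homogeneousFns ℓ (ℓ - 1 - r),
        ∑ v ∈ Finset.univ.erase (0 : Fin 2 → ZMod ℓ), f (M.mulVec v) * g (M.mulVec v) =
          ∑ v ∈ Finset.univ.erase (0 : Fin 2 → ZMod ℓ), f v * g v) ∧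
    (∀ f ∈ homogeneousFns ℓ r,
      (∀ g ∈ homogeneousFns ℓ (ℓ - 1 - r),
        ∑ v ∈ Finset.univ.erase (0 : Fin 2 → ZMod ℓ), f v * g v = 0) → f = 0) ∧
    (∀ g ∈ homogeneousFns ℓ (ℓ - 1 - r),
      (∀ f ∈ homogeneousFns ℓ r,
        ∑ v ∈ Finset.univ.erase (0 : Fin 2 → ZMod ℓ), f v * g v = 0) → g = 0) := by
  refine ⟨?_, ?_, ?_⟩
  · intro M hM f _ g _
    have hunit : IsUnit M.det := hM ▸ isUnit_one
    have hinv : M⁻¹ * M = 1 := Matrix.nonsing_inv_mul M hunit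
    have hinv' : M * M⁻¹ = 1 := Matrix.mul_nonsing_inv M hunit
    refine Finset.sum_nbij' (fun v => M.mulVec v) (fun v => M⁻¹.mulVec v) ?_ ?_ ?_ ?_ ?_
    · intro v hv
      rw [Finset.mem_erase] at hv ⊢
      refine ⟨fun h0 => hv.1 ?_, Finset.mem_univ _⟩
      have := congrArg (M⁻¹.mulVec) h0
      rwa [Matrix.mulVec_mulVec, hinv, Matrix.one_mulVec, Matrix.mulVec_zero] at this
    · intro v hv
      rw [Finset.mem_erase] at hv ⊢
      refine ⟨fun h0 => hv.1 ?_, Finset.mem_univ _⟩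
      have := congrArg (M.mulVec) h0
      rwa [Matrix.mulVec_mulVec, hinv', Matrix.one_mulVec, Matrix.mulVec_zero] at this
    · intro v _
      show M⁻¹.mulVec (M.mulVec v) = v
      rw [Matrix.mulVec_mulVec, hinv, Matrix.one_mulVec]
    · intro v _
      show M.mulVec (M⁻¹.mulVec v) = v
      rw [Matrix.mulVec_mulVec, hinv', Matrix.one_mulVec]
    · intro v _; rfl
  · intro f hf H
    refine aux_nondeg ℓ (ℓ - 1 - r) r (by omega) f hf.1 hf.2 ?_
    intro k hk0 hkhom
    rw [show ∑ v ∈ Finset.univ.erase (0 : Fin 2 → ZMod ℓ), k v * f v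
        = ∑ v ∈ Finset.univ.erase (0 : Fin 2 → ZMod ℓ), f v * k v by
      exact Finset.sum_congr rfl fun v _ => mul_comm _ _]
    exact H k ⟨hk0, hkhom⟩
  · intro g hg H
    exact aux_nondeg ℓ r (ℓ - 1 - r) (by omega) g hg.1 hg.2
      (fun k hk0 hkhom => H k ⟨hk0, hkhom⟩)
end

section
/- Let ℓ be a prime. The only SL₂(F_ℓ)-invariant homogeneous polynomial of degree ℓ-1 in F_ℓ[X,Y] is zero: if P ∈ F_ℓ[X,Y]_{ℓ-1} satisfies P(aX+bY, cX+dY) = P(X,Y) for all [[a,b],[c,d]] ∈ SL₂(F_ℓ), then P = 0. -/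
open MvPolynomial

/-- The substitution action of a 2×2 matrix `M` on polynomials:
`(P · M)(X, Y) = P(aX + bY, cX + dY)` for `M = !![a, b; c, d]`. -/
noncomputable def matrixSubstAction {R : Type*} [CommRing R]
    (M : Matrix (Fin 2) (Fin 2) R) (P : MvPolynomial (Fin 2) R) : MvPolynomial (Fin 2) R :=
  MvPolynomial.aeval (fun i => ∑ j : Fin 2, MvPolynomial.C (M i j) * X j) P

theorem eval_matrixSubstAction {R : Type*} [CommRing R] (M : Matrix (Fin 2) (Fin 2) R)
    (w : Fin 2 → R) (P : MvPolynomial (Fin 2) R) :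
    eval w (matrixSubstAction M P) = eval (M.mulVec w) P := by
  rw [matrixSubstAction, aeval_eq_eval₂Hom, coe_eval₂Hom, eval_eval₂]
  have h1 : (eval w).comp (algebraMap R (MvPolynomial (Fin 2) R)) = RingHom.id R := by
    ext r; simp [algebraMap_eq]
  have h2 : (fun s => (eval w) (∑ j : Fin 2, C (M s j) * X j)) = M.mulVec w := by
    funext i; simp [Matrix.mulVec, dotProduct]
  rw [h1, h2, eval₂_id]

/-- For a prime `ℓ`, the only `SL₂(F_ℓ)`-invariant homogeneous polynomial of
degree `ℓ - 1` in `F_ℓ[X,Y]` is zero. -/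
theorem invariant_homogeneous_degree_sub_one_eq_zero (ℓ : ℕ) (hℓ : ℓ.Prime)
    (P : MvPolynomial (Fin 2) (ZMod ℓ))
    (hP : P ∈ MvPolynomial.homogeneousSubmodule (Fin 2) (ZMod ℓ) (ℓ - 1))
    (hinv : ∀ M : Matrix (Fin 2) (Fin 2) (ZMod ℓ), M.det = 1 → matrixSubstAction M P = P) :
    P = 0 := by
  classical
  haveI : Fact ℓ.Prime := ⟨hℓ⟩
  have hcard : Fintype.card (ZMod ℓ) = ℓ := ZMod.card ℓ
  have hℓ2 : 2 ≤ ℓ := hℓ.two_le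
  have hP' : P.IsHomogeneous (ℓ - 1) := by rwa [mem_homogeneousSubmodule] at hP
  set c : ZMod ℓ := eval ![1, 0] P with hc
  have hdegd : ∀ d ∈ P.support, d 0 + d 1 = ℓ - 1 := by
    intro d hd
    have h1 := hP' (mem_support_iff.mp hd)
    have h2 : d.degree = d 0 + d 1 := by
      rw [Finsupp.degree_apply, Finset.sum_subset (Finset.subset_univ _)]
      · exact Fin.sum_univ_two d
      · intro x _ hx; exact Finsupp.notMem_support_iff.mp hx
    rw [show (Finsupp.weight (1 : Fin 2 → ℕ)) = Finsupp.weight (fun _ => 1) from rfl, ← Finsupp.degree_eq_weight_one] at h1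
    omega
  have h0 : eval (0 : Fin 2 → ZMod ℓ) P = 0 := by
    rw [eval_zero]
    have hne : (0 : Fin 2 →₀ ℕ).degree ≠ ℓ - 1 := by simp; omega
    simpa [constantCoeff_eq] using hP'.coeff_eq_zero hne
  have hconst : ∀ v : Fin 2 → ZMod ℓ, v ≠ 0 → eval v P = c := by
    intro v hv
    by_cases h0v : v 0 = 0
    · have h1v : v 1 ≠ 0 := by
        intro h; apply hv; funext i; fin_cases i <;> simp [h0v, h]
      have hdet : (!![0, -(v 1)⁻¹; v 1, 0] : Matrix (Fin 2) (Fin 2) (ZMod ℓ)).det = 1 := by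
        rw [Matrix.det_fin_two_of]
        field_simp
        ring
      have hkey := eval_matrixSubstAction (!![0, -(v 1)⁻¹; v 1, 0]) ![1,0] P
      rw [hinv _ hdet] at hkey
      have hmv : (!![0, -(v 1)⁻¹; v 1, 0] : Matrix (Fin 2) (Fin 2) (ZMod ℓ)).mulVec ![1,0] = v := by
        funext i; fin_cases i <;> simp [Matrix.mulVec, dotProduct, h0v]
      rw [hmv] at hkey
      exact hkey.symm
    · have hdet : (!![v 0, 0; v 1, (v 0)⁻¹] : Matrix (Fin 2) (Fin 2) (ZMod ℓ)).det = 1 := by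
        rw [Matrix.det_fin_two_of]
        field_simp
        ring
      have hkey := eval_matrixSubstAction (!![v 0, 0; v 1, (v 0)⁻¹]) ![1,0] P
      rw [hinv _ hdet] at hkey
      have hmv : (!![v 0, 0; v 1, (v 0)⁻¹] : Matrix (Fin 2) (Fin 2) (ZMod ℓ)).mulVec ![1,0] = v := by
        funext i; fin_cases i <;> simp [Matrix.mulVec, dotProduct]
      rw [hmv] at hkey
      exact hkey.symm
  have hsum0 : ∑ v : Fin 2 → ZMod ℓ, eval v P = 0 := by
    calc ∑ v : Fin 2 → ZMod ℓ, eval v P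
        = ∑ v : Fin 2 → ZMod ℓ, ∑ d ∈ P.support, coeff d P * ∏ i, v i ^ d i := by
          simp_rw [eval_eq']
      _ = ∑ d ∈ P.support, ∑ v : Fin 2 → ZMod ℓ, coeff d P * ∏ i, v i ^ d i :=
          Finset.sum_comm
      _ = ∑ d ∈ P.support, coeff d P * ∑ v : Fin 2 → ZMod ℓ, ∏ i, v i ^ d i := by
          simp_rw [Finset.mul_sum]
      _ = 0 := ?_
    apply Finset.sum_eq_zero
    intro d hd
    have hdeg := hdegd d hd
    have hsplit : ∑ v : Fin 2 → ZMod ℓ, ∏ i, v i ^ d i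
        = (∑ x : ZMod ℓ, x ^ d 0) * (∑ y : ZMod ℓ, y ^ d 1) := by
      calc ∑ v : Fin 2 → ZMod ℓ, ∏ i, v i ^ d i
          = ∑ p : ZMod ℓ × ZMod ℓ, p.1 ^ d 0 * p.2 ^ d 1 :=
            Fintype.sum_equiv (piFinTwoEquiv fun _ => ZMod ℓ) _ _
              (by intro v; simp [Fin.prod_univ_two])
        _ = (∑ x : ZMod ℓ, x ^ d 0) * (∑ y : ZMod ℓ, y ^ d 1) := by
            rw [Fintype.sum_mul_sum (fun x : ZMod ℓ => x ^ d 0) (fun y : ZMod ℓ => y ^ d 1)]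
            exact Fintype.sum_prod_type (f := fun p : ZMod ℓ × ZMod ℓ => p.1 ^ d 0 * p.2 ^ d 1)
    rcases lt_or_ge (d 0) (ℓ - 1) with h | h
    · have hz : (∑ x : ZMod ℓ, x ^ d 0) = 0 := by
        apply FiniteField.sum_pow_lt_card_sub_one
        rw [hcard]; omega
      rw [hsplit, hz, zero_mul, mul_zero]
    · have hz : (∑ y : ZMod ℓ, y ^ d 1) = 0 := by
        apply FiniteField.sum_pow_lt_card_sub_one
        rw [hcard]; omega
      rw [hsplit, hz, mul_zero, mul_zero]
  have hsum1 : ∑ v : Fin 2 → ZMod ℓ, eval v P = - c := by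
    have hite : ∀ v : Fin 2 → ZMod ℓ, eval v P = if v = 0 then 0 else c := by
      intro v
      split
      · next h => rw [h]; exact h0
      · next h => exact hconst v h
    simp_rw [hite]
    rw [← Finset.add_sum_erase _ _ (Finset.mem_univ (0 : Fin 2 → ZMod ℓ))]
    rw [if_pos rfl, zero_add]
    rw [Finset.sum_ite_of_false (by intro v hv; exact Finset.ne_of_mem_erase hv)]
    rw [Finset.sum_const, Finset.card_erase_of_mem (Finset.mem_univ _), Finset.card_univ]
    have hcard2 : Fintype.card (Fin 2 → ZMod ℓ) = ℓ ^ 2 := by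
      simp [Fintype.card_fun, hcard]
    rw [hcard2, nsmul_eq_mul]
    have : ((ℓ ^ 2 - 1 : ℕ) : ZMod ℓ) = -1 := by
      have h1 : 1 ≤ ℓ ^ 2 := Nat.one_le_pow _ _ (by omega)
      push_cast [Nat.cast_sub h1]
      simp [ZMod.natCast_self]
    rw [this]; ring
  have hc0 : c = 0 := by
    have h := hsum0.symm.trans hsum1
    exact neg_eq_zero.mp h.symm
  have hzero : ∀ v : Fin 2 → ZMod ℓ, eval v P = 0 := by
    intro v
    by_cases hv : v = 0
    · rw [hv]; exact h0
    · rw [hconst v hv, hc0]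
  apply MvPolynomial.eq_zero_of_eval_eq_zero (Fin 2) (ZMod ℓ) P hzero
  rw [mem_restrictDegree]
  intro s hs i
  rw [hcard]
  have := hdegd s hs
  have h0' := Finsupp.le_degree (0 : Fin 2) s
  have hdeg2 : s.degree = s 0 + s 1 := by
    rw [Finsupp.degree_apply, Finset.sum_subset (Finset.subset_univ _)]
    · exact Fin.sum_univ_two s
    · intro x _ hx; exact Finsupp.notMem_support_iff.mp hx
  have hi := Finsupp.le_degree i s
  omega
end

section
/- Let ℓ be a prime and 0 ≤ n ≤ ℓ-2. The space of SL₂(F_ℓ)-invariants of I_n (under (f·M)(a,b) = f((a,b)Mᵗ)) is one-dimensional if n = 0 and zero otherwise. -/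
open MvPolynomial

/-- The subspace of `SL₂(F_ℓ)`-invariant functions in `I_n`, for the action
`(f·M)(v) = f(M.mulVec v)`. -/
def homogeneousFnsInvariants (ℓ n : ℕ) :
    Submodule (ZMod ℓ) ((Fin 2 → ZMod ℓ) → ZMod ℓ) where
  carrier := {f | f ∈ homogeneousFns ℓ n ∧
    ∀ M : Matrix (Fin 2) (Fin 2) (ZMod ℓ), M.det = 1 → ∀ v, f (M.mulVec v) = f v}
  add_mem' := by
    rintro f g ⟨hf, hf'⟩ ⟨hg, hg'⟩
    exact ⟨add_mem hf hg, fun M hM v => by simp only [Pi.add_apply, hf' M hM v, hg' M hM v]⟩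
  zero_mem' := ⟨zero_mem _, fun M hM v => rfl⟩
  smul_mem' := by
    rintro c f ⟨hf, hf'⟩
    exact ⟨Submodule.smul_mem _ c hf, fun M hM v => by simp only [Pi.smul_apply, hf' M hM v]⟩


lemma exists_M {ℓ : ℕ} [Fact (Nat.Prime ℓ)] (v : Fin 2 → ZMod ℓ) (hv : v ≠ 0) :
    ∃ M : Matrix (Fin 2) (Fin 2) (ZMod ℓ), M.det = 1 ∧ M.mulVec ![1, 0] = v := by
  by_cases h0 : v 0 = 0
  · have h1 : v 1 ≠ 0 := by
      intro h
      apply hv; funext i; fin_cases i <;> simp [h0, h]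
    refine ⟨!![0, -(v 1)⁻¹; v 1, 0], ?_, ?_⟩
    · simp [Matrix.det_fin_two_of]
      field_simp
    · funext i; fin_cases i <;>
        simp [Matrix.mulVec, dotProduct, Fin.sum_univ_two, h0]
  · refine ⟨!![v 0, 0; v 1, (v 0)⁻¹], ?_, ?_⟩
    · simp [Matrix.det_fin_two_of]
      field_simp
    · funext i; fin_cases i <;>
        simp [Matrix.mulVec, dotProduct, Fin.sum_univ_two]

lemma mulVec_eq_zero {ℓ : ℕ} [Fact (Nat.Prime ℓ)] {M : Matrix (Fin 2) (Fin 2) (ZMod ℓ)}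
    (hM : M.det = 1) {v : Fin 2 → ZMod ℓ} (h : M.mulVec v = 0) : v = 0 := by
  have hinv : IsUnit M.det := by simp [hM]
  have := Matrix.invertibleOfIsUnitDet M hinv
  calc v = (⅟M * M).mulVec v := by simp
  _ = (⅟M).mulVec (M.mulVec v) := by rw [Matrix.mulVec_mulVec]
  _ = 0 := by rw [h]; simp

/-- For a prime `ℓ` and `0 ≤ n ≤ ℓ - 2`, the space of `SL₂(F_ℓ)`-invariants
of `I_n` is one-dimensional if `n = 0` and zero otherwise. -/
theorem homogeneousFnsInvariants_finrank (ℓ : ℕ) [Fact (Nat.Prime ℓ)] (n : ℕ)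
    (hn : n ≤ ℓ - 2) :
    Module.finrank (ZMod ℓ) ↥(homogeneousFnsInvariants ℓ n) = if n = 0 then 1 else 0 := by
  have hℓ2 : 2 ≤ ℓ := (Fact.out : Nat.Prime ℓ).two_le
  have he1 : (![1, 0] : Fin 2 → ZMod ℓ) ≠ 0 := by
    intro h
    have := congrFun h 0
    simp at this
  by_cases hn0 : n = 0
  · subst hn0
    simp only [if_pos]
    set f0 : (Fin 2 → ZMod ℓ) → ZMod ℓ := fun v => if v = 0 then 0 else 1 with hf0def
    have hmem : f0 ∈ homogeneousFnsInvariants ℓ 0 := by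
      refine ⟨⟨by simp [hf0def], fun x hx v => ?_⟩, fun M hM v => ?_⟩
      · have : x • v = 0 ↔ v = 0 := by
          constructor
          · intro h
            rcases smul_eq_zero.mp h with h | h
            · exact absurd h hx
            · exact h
          · intro h; simp [h]
        simp only [hf0def, this, pow_zero, one_mul]
      · have hiff : M.mulVec v = 0 ↔ v = 0 := by
          constructor
          · exact mulVec_eq_zero hM
          · intro h; simp [h]
        simp only [hf0def, hiff]
    have hspan : homogeneousFnsInvariants ℓ 0 = Submodule.span (ZMod ℓ) {f0} := by
      apply le_antisymm
      · rintro f ⟨⟨hzero, _⟩, hinv⟩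
        rw [Submodule.mem_span_singleton]
        refine ⟨f ![1, 0], ?_⟩
        funext v
        by_cases hv : v = 0
        · simp [hf0def, hv, hzero]
        · obtain ⟨M, hM, hMv⟩ := exists_M v hv
          have := hinv M hM ![1, 0]
          rw [hMv] at this
          simp [hf0def, hv, ← this]
      · rw [Submodule.span_singleton_le_iff_mem]
        exact hmem
    rw [hspan, finrank_span_singleton]
    intro h
    have := congrFun h ![1, 0]
    simp [hf0def, he1] at this
  · simp only [if_neg hn0]
    have hbot : homogeneousFnsInvariants ℓ n = ⊥ := by
      rw [eq_bot_iff]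
      rintro f ⟨⟨hzero, hhom⟩, hinv⟩
      simp only [Submodule.mem_bot]
      have hconst : ∀ v : Fin 2 → ZMod ℓ, v ≠ 0 → f v = f ![1, 0] := by
        intro v hv
        obtain ⟨M, hM, hMv⟩ := exists_M v hv
        have := hinv M hM ![1, 0]
        rw [hMv] at this
        exact this
      -- find x with x^n ≠ 1
      obtain ⟨g, hg⟩ := IsCyclic.exists_generator (α := (ZMod ℓ)ˣ)
      have hcard : orderOf g = ℓ - 1 := by
        rw [orderOf_eq_card_of_forall_mem_zpowers hg, Nat.card_eq_fintype_card, ZMod.card_units_eq_totient,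
          Nat.totient_prime (Fact.out : Nat.Prime ℓ)]
      have hnlt : n < ℓ - 1 := lt_of_le_of_lt hn (by omega)
      have hgn : (g : ZMod ℓ) ^ n ≠ 1 := by
        intro h
        have : g ^ n = 1 := by
          ext
          push_cast
          exact h
        have := orderOf_dvd_of_pow_eq_one this
        rw [hcard] at this
        have := Nat.le_of_dvd (Nat.pos_of_ne_zero hn0) this
        omega
      have hx := hhom (g : ZMod ℓ) (Units.ne_zero g) ![1, 0]
      have hs : (g : ZMod ℓ) • (![1, 0] : Fin 2 → ZMod ℓ) ≠ 0 := by
        intro h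
        rcases smul_eq_zero.mp h with h | h
        · exact Units.ne_zero g h
        · exact he1 h
      rw [hconst _ hs] at hx
      have hc : f ![1, 0] = 0 := by
        have := sub_eq_zero.mpr hx.symm
        rw [show (g : ZMod ℓ) ^ n * f ![1, 0] - f ![1, 0] = ((g : ZMod ℓ) ^ n - 1) * f ![1, 0] by ring] at this
        rcases mul_eq_zero.mp this with h | h
        · exact absurd (sub_eq_zero.mp h) hgn
        · exact h
      funext v
      by_cases hv : v = 0
      · simp [hv, hzero]
      · rw [hconst v hv, hc]; rfl
    rw [hbot]
    exact finrank_bot _ _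
end
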